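/- Fix an integer l ≥ 1, a real κ > 0, and t = (t_1, …, t_{2l-1}) ∈ ℝ_{≥0}^{2l-1}. For each integer N, set Σ_N := Σ_{i=1}^{2l-1} ⌊t_i √N⌋ and σ := Σ_{i=1}^{2l-1} t_i. Then lim_{N→∞} N^{(2l-1)/2} · (Σ_N + l + κ) / (N + κ)^{Σ_N + l} · ∏_{i=0}^{Σ_N - 1} (N - l - i) = σ · e^{-σ²/2}, where an empty product equals 1. -/

import Mathlib

open Filter Finset

private lemma sum_range_id_real (n : ℕ) : ∑ i ∈ range n, (i : ℝ) = n * (n - 1) / 2 := by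
  induction n with
  | zero => simp
  | succ n ih => rw [Finset.sum_range_succ, ih]; push_cast; ring

private lemma log_bounds {x : ℝ} (hx : 0 < x) (hx2 : x ≤ 1/2) :
    -x - 2 * x ^ 2 ≤ Real.log (1 - x) ∧ Real.log (1 - x) ≤ -x := by
  have h1 : (0:ℝ) < 1 - x := by linarith
  constructor
  · have h2 : Real.log (1 - x)⁻¹ ≤ (1 - x)⁻¹ - 1 :=
      Real.log_le_sub_one_of_pos (by positivity)
    rw [Real.log_inv] at h2
    have h4 : (1 - x)⁻¹ - 1 ≤ x + 2 * x ^ 2 := by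
      rw [sub_le_iff_le_add, inv_le_iff_one_le_mul₀ h1]  -- may need rename
      nlinarith
    linarith
  · have := Real.log_le_sub_one_of_pos h1
    linarith

set_option maxHeartbeats 1600000 in
theorem stmt3 (l : ℕ) (hl : 1 ≤ l) (κ : ℝ) (hκ : 0 < κ)
    (t : Fin (2 * l - 1) → ℝ) (ht : ∀ i, 0 ≤ t i) :
    Tendsto (fun N : ℕ =>
        Real.sqrt N ^ (2 * l - 1) *
          (((∑ i, ⌊t i * Real.sqrt N⌋₊ : ℕ) + l + κ) /
              ((N : ℝ) + κ) ^ ((∑ i, ⌊t i * Real.sqrt N⌋₊) + l) *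
            ∏ j ∈ Finset.range (∑ i, ⌊t i * Real.sqrt N⌋₊), ((N : ℝ) - l - j)))
      atTop
      (nhds ((∑ i, t i) * Real.exp (-(∑ i, t i) ^ 2 / 2))) := by
  set σ : ℝ := ∑ i, t i with hσdef
  have hσ0 : 0 ≤ σ := Finset.sum_nonneg fun i _ => ht i
  set S : ℕ → ℕ := fun N => ∑ i, ⌊t i * Real.sqrt N⌋₊ with hSdef
  have hsposall : ∀ N : ℕ, 1 ≤ N → 0 < Real.sqrt N := by
    intro N hN
    exact Real.sqrt_pos.2 (by exact_mod_cast hN)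
  have hMpos : ∀ N : ℕ, (0:ℝ) < (N : ℝ) + κ := fun N => by positivity
  have hs2 : ∀ N : ℕ, Real.sqrt N * Real.sqrt N = N := fun N =>
    Real.mul_self_sqrt (Nat.cast_nonneg N)
  have hsqrt : Tendsto (fun N : ℕ => Real.sqrt N) atTop atTop := by
    rw [tendsto_atTop_atTop]
    intro b
    refine ⟨⌈b^2⌉₊, fun N hN => ?_⟩
    rcases le_or_gt b 0 with hb | hb
    · exact hb.trans (Real.sqrt_nonneg _)
    · rw [show b = Real.sqrt (b^2) by rw [Real.sqrt_sq hb.le]]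
      apply Real.sqrt_le_sqrt
      exact (Nat.le_ceil _).trans (by exact_mod_cast hN)
  have hinvs : Tendsto (fun N : ℕ => (Real.sqrt N)⁻¹) atTop (nhds 0) :=
    hsqrt.inv_tendsto_atTop
  have hM : Tendsto (fun N : ℕ => (N : ℝ) + κ) atTop atTop :=
    tendsto_atTop_add_const_right _ κ tendsto_natCast_atTop_atTop
  have hinvM : Tendsto (fun N : ℕ => ((N : ℝ) + κ)⁻¹) atTop (nhds 0) :=
    hM.inv_tendsto_atTop
  have hratio : Tendsto (fun N : ℕ => (N : ℝ) / ((N : ℝ) + κ)) atTop (nhds 1) := by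
    have h1 : Tendsto (fun N : ℕ => 1 - κ * ((N : ℝ) + κ)⁻¹) atTop (nhds (1 - κ * 0)) :=
      tendsto_const_nhds.sub (tendsto_const_nhds.mul hinvM)
    rw [mul_zero, sub_zero] at h1
    refine h1.congr fun N => ?_
    have := (hMpos N).ne'
    field_simp
    ring
  have hS_le : ∀ N : ℕ, (S N : ℝ) ≤ σ * Real.sqrt N := by
    intro N
    rw [hSdef]
    push_cast
    rw [hσdef, Finset.sum_mul]
    exact Finset.sum_le_sum fun i _ =>
      Nat.floor_le (mul_nonneg (ht i) (Real.sqrt_nonneg _))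
  have hS_ge : ∀ N : ℕ, σ * Real.sqrt N - (2 * l - 1 : ℕ) ≤ (S N : ℝ) := by
    intro N
    rw [hSdef]
    push_cast
    rw [hσdef, Finset.sum_mul]
    have h : ∀ i : Fin (2 * l - 1), t i * Real.sqrt N - 1 ≤ (⌊t i * Real.sqrt N⌋₊ : ℝ) :=
      fun i => (Nat.sub_one_lt_floor _).le
    calc (∑ i, t i * Real.sqrt N) - (2 * l - 1 : ℕ)
        = ∑ i : Fin (2 * l - 1), (t i * Real.sqrt N - 1) := by
          rw [Finset.sum_sub_distrib]
          simp
      _ ≤ ∑ i, (⌊t i * Real.sqrt N⌋₊ : ℝ) := Finset.sum_le_sum fun i _ => h i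
  have hSdiv : Tendsto (fun N : ℕ => (S N : ℝ) / Real.sqrt N) atTop (nhds σ) := by
    have hlo : Tendsto (fun N : ℕ => σ - (2 * l - 1 : ℕ) * (Real.sqrt N)⁻¹) atTop
        (nhds (σ - (2 * l - 1 : ℕ) * 0)) :=
      tendsto_const_nhds.sub (tendsto_const_nhds.mul hinvs)
    rw [mul_zero, sub_zero] at hlo
    refine tendsto_of_tendsto_of_tendsto_of_le_of_le' hlo tendsto_const_nhds ?_ ?_
    · filter_upwards [eventually_ge_atTop 1] with N hN
      have hs := hsposall N hN
      rw [le_div_iff₀ hs]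
      have hinv : (Real.sqrt N)⁻¹ * Real.sqrt N = 1 := inv_mul_cancel₀ hs.ne'
      nlinarith [hS_ge N]
    · filter_upwards [eventually_ge_atTop 1] with N hN
      have hs := hsposall N hN
      rw [div_le_iff₀ hs]
      exact hS_le N
  have hSl : Tendsto (fun N : ℕ => ((S N : ℝ) + l + κ) / Real.sqrt N) atTop (nhds σ) := by
    have h1 : Tendsto (fun N : ℕ => (S N : ℝ) / Real.sqrt N + ((l : ℝ) + κ) / Real.sqrt N)
        atTop (nhds (σ + ((l : ℝ) + κ) * 0)) := by
      refine hSdiv.add ?_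
      have := tendsto_const_nhds (x := ((l : ℝ) + κ)) (f := atTop (α := ℕ)) |>.mul hinvs
      simpa [div_eq_mul_inv] using this
    rw [mul_zero, add_zero] at h1
    refine h1.congr fun N => ?_
    rw [← add_div]
    ring_nf
  have hq : Tendsto (fun N : ℕ => Real.sqrt N / ((N : ℝ) + κ)) atTop (nhds 0) := by
    have h1 : Tendsto (fun N : ℕ => (Real.sqrt N)⁻¹ * ((N : ℝ) / ((N : ℝ) + κ))) atTop
        (nhds (0 * 1)) := hinvs.mul hratio
    rw [zero_mul] at h1
    refine h1.congr' ?_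
    filter_upwards [eventually_ge_atTop 1] with N hN
    have hs := hsposall N hN
    rw [← mul_div_assoc]
    congr 1
    rw [inv_mul_eq_div, div_eq_iff hs.ne']
    exact (hs2 N).symm
  have hc : Tendsto (fun N : ℕ => ((S N : ℝ) + l + κ) / ((N : ℝ) + κ)) atTop (nhds 0) := by
    have h1 : Tendsto
        (fun N : ℕ => (((S N : ℝ) + l + κ) / Real.sqrt N) * (Real.sqrt N / ((N : ℝ) + κ)))
        atTop (nhds (σ * 0)) := hSl.mul hq
    rw [mul_zero] at h1
    refine h1.congr' ?_
    filter_upwards [eventually_ge_atTop 1] with N hN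
    have hs := (hsposall N hN).ne'
    have hMn := (hMpos N).ne'
    field_simp
  -- sum evaluation
  have hsum_eval : ∀ N : ℕ, ∑ j ∈ range (S N), ((l : ℝ) + j + κ)
      = (S N : ℝ) * ((l : ℝ) + κ) + (S N : ℝ) * ((S N : ℝ) - 1) / 2 := by
    intro N
    have h : ∀ j ∈ range (S N), ((l : ℝ) + j + κ) = (j : ℝ) + ((l : ℝ) + κ) :=
      fun j _ => by ring
    rw [Finset.sum_congr rfl h, Finset.sum_add_distrib, sum_range_id_real,
      Finset.sum_const, Finset.card_range, nsmul_eq_mul]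
    ring
  -- A → σ²/2
  have hA : Tendsto (fun N : ℕ => ∑ j ∈ range (S N), (((l : ℝ) + j + κ) / ((N : ℝ) + κ)))
      atTop (nhds (σ ^ 2 / 2)) := by
    have h1 : Tendsto (fun N : ℕ =>
        ((S N : ℝ) / Real.sqrt N) * ((l : ℝ) + κ) * (Real.sqrt N / ((N : ℝ) + κ))
          + ((S N : ℝ) / Real.sqrt N) * ((S N : ℝ) / Real.sqrt N - (Real.sqrt N)⁻¹)
            * ((N : ℝ) / ((N : ℝ) + κ)) / 2)
        atTop (nhds (σ * ((l : ℝ) + κ) * 0 + σ * (σ - 0) * 1 / 2)) :=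
      ((hSdiv.mul tendsto_const_nhds).mul hq).add
        (((hSdiv.mul (hSdiv.sub hinvs)).mul hratio).div_const 2)
    have h2 : σ * ((l : ℝ) + κ) * 0 + σ * (σ - 0) * 1 / 2 = σ ^ 2 / 2 := by ring
    rw [h2] at h1
    refine h1.congr' ?_
    filter_upwards [eventually_ge_atTop 1] with N hN
    have hs := hsposall N hN
    have hMn := (hMpos N).ne'
    rw [← Finset.sum_div, hsum_eval N]
    field_simp
    rw [Real.sq_sqrt (Nat.cast_nonneg _)]; ring
  -- E → 0
  have hE : Tendsto (fun N : ℕ =>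
      2 * (S N : ℝ) * (((S N : ℝ) + l + κ) / ((N : ℝ) + κ)) ^ 2) atTop (nhds 0) := by
    have h1 : Tendsto (fun N : ℕ =>
        2 * ((S N : ℝ) / Real.sqrt N) * (((S N : ℝ) + l + κ) / Real.sqrt N) ^ 2
          * (Real.sqrt N / ((N : ℝ) + κ)) * ((N : ℝ) / ((N : ℝ) + κ)))
        atTop (nhds (2 * σ * σ ^ 2 * 0 * 1)) :=
      ((((tendsto_const_nhds.mul hSdiv)).mul (hSl.pow 2)).mul hq).mul hratio
    rw [mul_zero, zero_mul] at h1
    refine h1.congr' ?_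
    filter_upwards [eventually_ge_atTop 1] with N hN
    have hs := hsposall N hN
    have hMn := (hMpos N).ne'
    field_simp
    nlinarith [hs2 N, hs.ne']
  -- eventually c ≤ 1/2
  have hhalf : ∀ᶠ N : ℕ in atTop, ((S N : ℝ) + l + κ) / ((N : ℝ) + κ) ≤ 1 / 2 :=
    hc.eventually (eventually_le_nhds (by norm_num))
  -- per-term facts
  have hx_facts : ∀ N : ℕ, ((S N : ℝ) + l + κ) / ((N : ℝ) + κ) ≤ 1 / 2 →
      ∀ j ∈ range (S N), 0 < ((l : ℝ) + j + κ) / ((N : ℝ) + κ) ∧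
        ((l : ℝ) + j + κ) / ((N : ℝ) + κ) ≤ ((S N : ℝ) + l + κ) / ((N : ℝ) + κ) := by
    intro N hN j hj
    have hM' := hMpos N
    have hj' : (j : ℝ) < (S N : ℝ) := by
      exact_mod_cast Finset.mem_range.1 hj
    have hlpos : (0:ℝ) < (l : ℝ) + j + κ := by positivity
    have hnum : (l : ℝ) + j + κ ≤ (S N : ℝ) + l + κ := by linarith
    exact ⟨div_pos hlpos hM', by gcongr⟩
  -- log sum → -σ²/2
  have hlog : Tendsto (fun N : ℕ =>
      ∑ j ∈ range (S N), Real.log (1 - ((l : ℝ) + j + κ) / ((N : ℝ) + κ)))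
      atTop (nhds (-(σ ^ 2 / 2))) := by
    have hup : Tendsto (fun N : ℕ =>
        -∑ j ∈ range (S N), (((l : ℝ) + j + κ) / ((N : ℝ) + κ))) atTop (nhds (-(σ ^ 2 / 2))) :=
      hA.neg
    have hlo : Tendsto (fun N : ℕ =>
        -∑ j ∈ range (S N), (((l : ℝ) + j + κ) / ((N : ℝ) + κ))
          - 2 * (S N : ℝ) * (((S N : ℝ) + l + κ) / ((N : ℝ) + κ)) ^ 2) atTop
        (nhds (-(σ ^ 2 / 2) - 0)) := hA.neg.sub hE
    rw [sub_zero] at hlo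
    refine tendsto_of_tendsto_of_tendsto_of_le_of_le' hlo hup ?_ ?_
    · filter_upwards [hhalf] with N hN
      set c := ((S N : ℝ) + l + κ) / ((N : ℝ) + κ) with hcdef
      calc -∑ j ∈ range (S N), (((l : ℝ) + j + κ) / ((N : ℝ) + κ)) - 2 * (S N : ℝ) * c ^ 2
          = ∑ j ∈ range (S N),
              (-(((l : ℝ) + j + κ) / ((N : ℝ) + κ)) - 2 * c ^ 2) := by
            rw [Finset.sum_sub_distrib, Finset.sum_const, Finset.card_range, ← Finset.sum_neg_distrib,
              nsmul_eq_mul]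
            ring
        _ ≤ ∑ j ∈ range (S N), Real.log (1 - ((l : ℝ) + j + κ) / ((N : ℝ) + κ)) := by
            apply Finset.sum_le_sum
            intro j hj
            obtain ⟨hx0, hxc⟩ := hx_facts N hN j hj
            have hxhalf : ((l : ℝ) + j + κ) / ((N : ℝ) + κ) ≤ 1 / 2 := hxc.trans hN
            have hb := (log_bounds hx0 hxhalf).1
            have hsq : (((l : ℝ) + j + κ) / ((N : ℝ) + κ)) ^ 2 ≤ c ^ 2 := by
              apply pow_le_pow_left₀ hx0.le hxc
            linarith
    · filter_upwards [hhalf] with N hN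
      rw [← Finset.sum_neg_distrib]
      apply Finset.sum_le_sum
      intro j hj
      obtain ⟨hx0, hxc⟩ := hx_facts N hN j hj
      exact (log_bounds hx0 (hxc.trans hN)).2
  -- product → exp(-σ²/2)
  have hP : Tendsto (fun N : ℕ =>
      ∏ j ∈ range (S N), (1 - ((l : ℝ) + j + κ) / ((N : ℝ) + κ)))
      atTop (nhds (Real.exp (-(σ ^ 2 / 2)))) := by
    have h1 : Tendsto (fun N : ℕ =>
        Real.exp (∑ j ∈ range (S N), Real.log (1 - ((l : ℝ) + j + κ) / ((N : ℝ) + κ))))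
        atTop (nhds (Real.exp (-(σ ^ 2 / 2)))) :=
      (Real.continuous_exp.tendsto _).comp hlog
    refine h1.congr' ?_
    filter_upwards [hhalf] with N hN
    rw [Real.exp_sum]
    refine Finset.prod_congr rfl fun j hj => ?_
    obtain ⟨hx0, hxc⟩ := hx_facts N hN j hj
    have : ((l : ℝ) + j + κ) / ((N : ℝ) + κ) ≤ 1 / 2 := hxc.trans hN
    exact Real.exp_log (by linarith)
  -- final assembly
  have hfin : Tendsto (fun N : ℕ =>
      (((S N : ℝ) + l + κ) / Real.sqrt N) *
        (((N : ℝ) / ((N : ℝ) + κ)) ^ l *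
          ∏ j ∈ range (S N), (1 - ((l : ℝ) + j + κ) / ((N : ℝ) + κ))))
      atTop (nhds (σ * ((1 : ℝ) ^ l * Real.exp (-(σ ^ 2 / 2))))) :=
    hSl.mul ((hratio.pow l).mul hP)
  rw [one_pow, one_mul] at hfin
  have hgoal : σ * Real.exp (-σ ^ 2 / 2) = σ * Real.exp (-(σ ^ 2 / 2)) := by
    rw [neg_div]
  rw [hgoal]
  refine hfin.congr' ?_
  filter_upwards [eventually_ge_atTop 1] with N hN
  rw [show (∑ i, ⌊t i * Real.sqrt (N : ℕ)⌋₊) = S N from rfl]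
  have hs := hsposall N hN
  have hMn := (hMpos N).ne'
  have hprod : ∏ j ∈ range (S N), (1 - ((l : ℝ) + j + κ) / ((N : ℝ) + κ))
      = (∏ j ∈ range (S N), ((N : ℝ) - l - j)) / ((N : ℝ) + κ) ^ (S N) := by
    calc ∏ j ∈ range (S N), (1 - ((l : ℝ) + j + κ) / ((N : ℝ) + κ))
        = ∏ j ∈ range (S N), (((N : ℝ) - l - j) / ((N : ℝ) + κ)) := by
          refine Finset.prod_congr rfl fun j _ => ?_
          field_simp
          ring
      _ = (∏ j ∈ range (S N), ((N : ℝ) - l - j)) / ((N : ℝ) + κ) ^ (S N) := by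
          rw [Finset.prod_div_distrib, Finset.prod_const, Finset.card_range]
  have key : ((N : ℝ)) ^ l = Real.sqrt N ^ (2 * l - 1) * Real.sqrt N := by
    have h2l : Real.sqrt N ^ (2 * l) = ((N : ℝ)) ^ l := by
      rw [pow_mul, sq, hs2 N]
    rw [← h2l, ← pow_succ, Nat.sub_add_cancel (by omega : 1 ≤ 2 * l)]
  rw [hprod, div_pow, key, pow_add]
  obtain ⟨n, hn⟩ : ∃ n, S N = n := ⟨_, rfl⟩
  rw [hn]
  set P : ℝ := ∏ j ∈ range n, ((N : ℝ) - l - j) with hPdef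
  set s : ℝ := Real.sqrt N with hsd
  set M : ℝ := (N : ℝ) + κ with hMd
  field_simp
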